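/- Fix ε ∈ (0,1/16), θ ∈ (ε,1/16), and let N = ⌊εL⌋, Λ_L = 𝒮_{L,M}(θ) with M = ⌊(L−1)/2⌋. There exists L₀ = L₀(ε) such that for all L ≥ L₀, all n with N/2 < n < N, and all x ∈ 𝒱_L^N with d_L^N(x, 𝒱_{L,1}^N) < L^{3/2} and |x ∩ Λ_L| = n: every center of a closest droplet lies in the sector 𝒮_{L,M}(θ + ε), i.e. 𝒲_L(x) ⊆ 𝒮_{L,M}(θ + ε), and moreover for every m ∈ 𝒲_L(x) the droplet c_{L,m}^N is contained in 𝒮_{L,M}(θ + 2ε). -/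

import Mathlib

open Finset
open scoped Classical
open Fin.NatCast

noncomputable section

/-- Distance on the cycle `ℤ/L`. -/
def cycDist {L : ℕ} (a b : Fin L) : ℕ := min (a - b).val (b - a).val

/-- Hard-core configuration graph: an edge moves one particle to a free neighbouring site. -/
def hcGraph (L : ℕ) [NeZero L] : SimpleGraph (Finset (Fin L)) where
  Adj x y := x.card = y.card ∧ ∃ j : Fin L, symmDiff x y = {j, j + ((1 : ℕ) : Fin L)}
  symm := by
    constructor
    rintro x y ⟨h1, j, h2⟩
    refine ⟨h1.symm, j, ?_⟩
    rw [symmDiff_comm]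
    exact h2
  loopless := by
    constructor
    rintro x ⟨-, j, h2⟩
    have hj : j ∈ symmDiff x x := by rw [h2]; simp
    rw [symmDiff_self] at hj
    simp at hj

/-- Graph distance `d_L^N` on the hard-core configuration graph. -/
def dN (L : ℕ) [NeZero L] (x y : Finset (Fin L)) : ℕ := (hcGraph L).dist x y

/-- The droplet (cluster of `N` consecutive sites) centred at `m`. -/
def droplet (L N : ℕ) [NeZero L] (m : Fin L) : Finset (Fin L) :=
  (Finset.range N).image fun i => m - (((N - 1) / 2 : ℕ) : Fin L) + (i : Fin L)

def isDroplet (L N : ℕ) [NeZero L] (c : Finset (Fin L)) : Prop := ∃ m : Fin L, c = droplet L N m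

/-- Distance to the set of droplet configurations. -/
def distDrop (L N : ℕ) [NeZero L] (x : Finset (Fin L)) : ℕ :=
  sInf (Set.range fun m : Fin L => dN L x (droplet L N m))

/-- Centres of droplets closest to `x`. -/
def WL (L N : ℕ) [NeZero L] (x : Finset (Fin L)) : Set (Fin L) :=
  {m : Fin L | dN L x (droplet L N m) = distDrop L N x}

/-- A path of length `k` from `x` to `y` in the configuration graph. -/
def IsPathN (L : ℕ) [NeZero L] (u : ℕ → Finset (Fin L)) (k : ℕ) (x y : Finset (Fin L)) : Prop :=
  u 0 = x ∧ u k = y ∧ ∀ l < k, (hcGraph L).Adj (u l) (u (l + 1))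

/-- The particle-tracking of a path: the labelled positions `ũ`. -/
def IsTracking (L N : ℕ) [NeZero L] (u : ℕ → Finset (Fin L)) (k : ℕ) (ut : ℕ → Fin N → Fin L) : Prop :=
  StrictMono (ut 0) ∧
  (∀ l ≤ k, u l = Finset.image (ut l) Finset.univ) ∧
  ∀ l < k, ∀ j : Fin N, (ut l j ∈ u (l + 1) → ut (l + 1) j = ut l j) ∧
    (ut l j ∉ u (l + 1) → ut (l + 1) j ∈ u (l + 1) \ u l)

/-- `L_j^u` : distance travelled by particle `j` along the tracked path. -/
def travel {L N : ℕ} (ut : ℕ → Fin N → Fin L) (k : ℕ) (j : Fin N) : ℕ :=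
  ∑ l ∈ Finset.range k, cycDist (ut l j) (ut (l + 1) j)

/-- `I_-^u` : particles moving counter-clockwise. -/
def Iminus {L N : ℕ} [NeZero L] (ut : ℕ → Fin N → Fin L) (k : ℕ) (j : Fin N) : Prop :=
  travel ut k j ≠ 0 ∧ ∃ l ≤ k, ut l j = ut 0 j - ((1 : ℕ) : Fin L)

/-- `I_+^u` : particles moving clockwise. -/
def Iplus {L N : ℕ} [NeZero L] (ut : ℕ → Fin N → Fin L) (k : ℕ) (j : Fin N) : Prop :=
  travel ut k j ≠ 0 ∧ ∃ l ≤ k, ut l j = ut 0 j + ((1 : ℕ) : Fin L)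

/-- `I_0^u` : particles that do not move. -/
def I0 {L N : ℕ} (ut : ℕ → Fin N → Fin L) (k : ℕ) (j : Fin N) : Prop := travel ut k j = 0

/-- The midpoint `M = ⌊(L-1)/2⌋` of the cycle. -/
def midL (L : ℕ) [NeZero L] : Fin L := (((L - 1) / 2 : ℕ) : Fin L)

/-- The sector of size `θ` around `m`, as a set. -/
def sector (L : ℕ) [NeZero L] (m : Fin L) (θ : ℝ) : Set (Fin L) :=
  {k : Fin L | (cycDist k m : ℝ) < θ * L}

/-- The sector of size `θ` around `m`, as a finset. -/
def secF (L : ℕ) [NeZero L] (m : Fin L) (θ : ℝ) : Finset (Fin L) :=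
  Finset.univ.filter fun k => (cycDist k m : ℝ) < θ * L

/-- `N(ε,L) = ⌊εL⌋`, the particle number. -/
def NL (ε : ℝ) (L : ℕ) : ℕ := ⌊ε * (L : ℝ)⌋₊

/-- Number of sites strictly within distance `θL` of the midpoint (on one side). -/
def sP (L : ℕ) (θ : ℝ) : ℕ := ⌈θ * (L : ℝ)⌉₊ - 1

/-- `λ₊`, the right endpoint of the sector `Λ_L = 𝒮_{L,M}(θ)`. -/
def lamP (L : ℕ) [NeZero L] (θ : ℝ) : Fin L := midL L + ((sP L θ : ℕ) : Fin L)

/-- `λ₋`, the left endpoint of the sector `Λ_L = 𝒮_{L,M}(θ)`. -/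
def lamM (L : ℕ) [NeZero L] (θ : ℝ) : Fin L := midL L - ((sP L θ : ℕ) : Fin L)

/-- `a₊,j = λ₊ + j`. -/
def aP (L : ℕ) [NeZero L] (θ : ℝ) (j : ℕ) : Fin L := lamP L θ + ((j : ℕ) : Fin L)

/-- `a₋,j = λ₋ - j`. -/
def aM (L : ℕ) [NeZero L] (θ : ℝ) (j : ℕ) : Fin L := lamM L θ - ((j : ℕ) : Fin L)

/-- `y₊ⁿ = λ₊ - {0,…,n-1}`, the cluster attached to the right boundary of `Λ_L`. -/
def yP (L : ℕ) [NeZero L] (θ : ℝ) (n : ℕ) : Finset (Fin L) :=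
  (Finset.range n).image fun i => lamP L θ - ((i : ℕ) : Fin L)

/-- `y₋ⁿ = λ₋ + {0,…,n-1}`, the cluster attached to the left boundary of `Λ_L`. -/
def yM (L : ℕ) [NeZero L] (θ : ℝ) (n : ℕ) : Finset (Fin L) :=
  (Finset.range n).image fun i => lamM L θ + ((i : ℕ) : Fin L)

/-- The function `h_L^n` of the paper. -/
def hfun (L : ℕ) [NeZero L] (θ : ℝ) (n : ℕ) (y : Finset (Fin L)) : ℝ :=
  if y = yP L θ n ∨ y = yM L θ n then 0
  else
    min (min (distDrop L (n + 1) (insert (aP L θ 1) y) : ℝ)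
          (distDrop L (n + 1) (insert (aM L θ 1) y) : ℝ))
        ((L : ℝ) ^ ((5 : ℝ) / 4)) - 1

set_option linter.unusedSectionVars false
open Fin.CommRing



section cyc
variable {L : ℕ} [NeZero L]

lemma natCast_sub_natCast {a b : ℕ} (h : b ≤ a) :
    ((a : Fin L)) - (b : Fin L) = ((a - b : ℕ) : Fin L) := by
  rw [eq_comm, eq_sub_iff_add_eq, ← Nat.cast_add, Nat.sub_add_cancel h]

lemma cycDist_le_left (a b : Fin L) : cycDist a b ≤ (a - b).val := min_le_left _ _
lemma cycDist_le_right (a b : Fin L) : cycDist a b ≤ (b - a).val := min_le_right _ _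

lemma cyc_aux (a b c : Fin L) : cycDist a c ≤ (a - b).val + (c - b).val := by
  set s := (a - b).val with hs
  set t := (c - b).val with ht
  have hsv : ((s : Fin L)) = a - b := Fin.cast_val_eq_self _
  have htv : ((t : Fin L)) = c - b := Fin.cast_val_eq_self _
  rcases le_total t s with h | h
  · have h1 : a - c = ((s - t : ℕ) : Fin L) := by
      rw [← natCast_sub_natCast h, hsv, htv]; ring
    have := cycDist_le_left a c
    rw [h1, Fin.val_cast_of_lt (lt_of_le_of_lt (Nat.sub_le _ _) (a - b).isLt)] at this
    omega
  · have h1 : c - a = ((t - s : ℕ) : Fin L) := by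
      rw [← natCast_sub_natCast h, hsv, htv]; ring
    have := cycDist_le_right a c
    rw [h1, Fin.val_cast_of_lt (lt_of_le_of_lt (Nat.sub_le _ _) (c - b).isLt)] at this
    omega

lemma cyc_aux2 (a b c : Fin L) : cycDist a c ≤ (b - a).val + (b - c).val := by
  set s := (b - a).val with hs
  set t := (b - c).val with ht
  have hsv : ((s : Fin L)) = b - a := Fin.cast_val_eq_self _
  have htv : ((t : Fin L)) = b - c := Fin.cast_val_eq_self _
  rcases le_total t s with h | h
  · have h1 : c - a = ((s - t : ℕ) : Fin L) := by
      rw [← natCast_sub_natCast h, hsv, htv]; ring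
    have := cycDist_le_right a c
    rw [h1, Fin.val_cast_of_lt (lt_of_le_of_lt (Nat.sub_le _ _) (b - a).isLt)] at this
    omega
  · have h1 : a - c = ((t - s : ℕ) : Fin L) := by
      rw [← natCast_sub_natCast h, hsv, htv]; ring
    have := cycDist_le_left a c
    rw [h1, Fin.val_cast_of_lt (lt_of_le_of_lt (Nat.sub_le _ _) (b - c).isLt)] at this
    omega

lemma cycDist_triangle (a b c : Fin L) : cycDist a c ≤ cycDist a b + cycDist b c := by
  have h1 : cycDist a c ≤ (a - b).val + (b - c).val := by
    have e : a - c = (a - b) + (b - c) := by ring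
    calc cycDist a c ≤ (a - c).val := cycDist_le_left a c
    _ ≤ (a - b).val + (b - c).val := by rw [e, Fin.val_add]; exact Nat.mod_le _ _
  have h2 : cycDist a c ≤ (c - b).val + (b - a).val := by
    have e : c - a = (c - b) + (b - a) := by ring
    calc cycDist a c ≤ (c - a).val := cycDist_le_right a c
    _ ≤ (c - b).val + (b - a).val := by rw [e, Fin.val_add]; exact Nat.mod_le _ _
  have h3 := cyc_aux a b c
  have h4 := cyc_aux2 a b c
  unfold cycDist at *
  omega

lemma cycDist_comm (a b : Fin L) : cycDist a b = cycDist b a := by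
  unfold cycDist; omega

lemma cycDist_adj (hL : 2 ≤ L) (j : Fin L) : cycDist j (j + ((1:ℕ) : Fin L)) ≤ 1 := by
  have : (j + ((1:ℕ) : Fin L)) - j = ((1:ℕ) : Fin L) := by ring
  have h := cycDist_le_right j (j + ((1:ℕ) : Fin L))
  rw [this, Fin.val_cast_of_lt hL] at h
  exact h

lemma one_ne_zero_fin (hL : 2 ≤ L) : ((1:ℕ) : Fin L) ≠ 0 := by
  intro h
  have := congrArg Fin.val h
  rw [Fin.val_cast_of_lt hL] at this
  simp at this

end cyc

section drop
variable {L : ℕ} [NeZero L]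

lemma droplet_eq (N : ℕ) (m : Fin L) :
    droplet L N m =
      (Finset.range N).image fun i : ℕ => m - (((N - 1) / 2 : ℕ) : Fin L) + ((i : ℕ) : Fin L) := by
  ext k
  rw [droplet, Finset.mem_image, Finset.mem_image]
  constructor
  · rintro ⟨i, hi, rfl⟩
    simp at hi
    obtain ⟨a, ha, rfl⟩ := hi
    exact ⟨a, Finset.mem_range.mpr ha, rfl⟩
  · rintro ⟨a, ha, rfl⟩
    rw [Finset.mem_range] at ha
    refine ⟨(a : Fin L), by simp; exact ⟨a, ha, rfl⟩, rfl⟩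

lemma droplet_card {N : ℕ} (hN : N ≤ L) (m : Fin L) : (droplet L N m).card = N := by
  rw [droplet_eq]
  rw [Finset.card_image_of_injOn, Finset.card_range]
  intro i hi i' hi' h
  simp only [Finset.coe_range, Set.mem_Iio] at hi hi'
  have h2 : ((i : Fin L)) = (i' : Fin L) := add_left_cancel h
  have := congrArg Fin.val h2
  rwa [Fin.val_cast_of_lt (lt_of_lt_of_le hi hN),
    Fin.val_cast_of_lt (lt_of_lt_of_le hi' hN)] at this

lemma droplet_dist {N : ℕ} (hN : N ≤ L) (m : Fin L) :
    ∀ k ∈ droplet L N m, 2 * cycDist k m ≤ N := by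
  intro k hk
  rw [droplet_eq, Finset.mem_image] at hk
  obtain ⟨i, hi, rfl⟩ := hk
  rw [Finset.mem_range] at hi
  set h := (N - 1) / 2 with hh
  have hhL : h < L := by omega
  have hiL : i < L := by omega
  rcases le_total i h with hih | hih
  · have e2 : m - ((h : ℕ) : Fin L) + ((i : ℕ) : Fin L) - m = ((i : ℕ) : Fin L) - ((h:ℕ) : Fin L) := by ring
    have e3 : m - (m - ((h:ℕ) : Fin L) + ((i:ℕ) : Fin L)) = ((h - i : ℕ) : Fin L) := by
      rw [← natCast_sub_natCast hih]; ring
    have hle := cycDist_le_right (m - ((h:ℕ) : Fin L) + ((i:ℕ) : Fin L)) m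
    rw [e3, Fin.val_cast_of_lt (by omega : h - i < L)] at hle
    omega
  · have e2 : (m - ((h:ℕ) : Fin L) + ((i:ℕ) : Fin L)) - m = ((i - h : ℕ) : Fin L) := by
      rw [← natCast_sub_natCast hih]; ring
    have hle := cycDist_le_left (m - ((h:ℕ) : Fin L) + ((i:ℕ) : Fin L)) m
    rw [e2, Fin.val_cast_of_lt (by omega : i - h < L)] at hle
    omega

end drop

section sd
variable {α : Type*} [DecidableEq α]

lemma symmDiff_insert_erase {x : Finset α} {a b : α} (ha : a ∈ x) (hb : b ∉ x) (hab : a ≠ b) :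
    symmDiff x (insert b (x.erase a)) = {a, b} := by
  ext c
  rw [Finset.mem_symmDiff]
  simp only [Finset.mem_insert, Finset.mem_erase]
  by_cases h1 : c = a <;> by_cases h2 : c = b <;> simp [h1, h2] <;> tauto

end sd

section walkbound
variable {L : ℕ} [NeZero L]

lemma adj_sum_bound (hL : 2 ≤ L) (g : Fin L → ℕ)
    (hg : ∀ j : Fin L, g (j + ((1:ℕ) : Fin L)) ≤ g j + 1 ∧ g j ≤ g (j + ((1:ℕ) : Fin L)) + 1)
    {u v : Finset (Fin L)} (h : (hcGraph L).Adj u v) :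
    ∑ k ∈ u, g k ≤ (∑ k ∈ v, g k) + 1 := by
  obtain ⟨hc, j, hs⟩ := h
  have hone : ((1:ℕ) : Fin L) ≠ 0 := one_ne_zero_fin hL
  have hjj : j ≠ j + ((1:ℕ) : Fin L) := by
    intro h; exact hone (by simpa using (left_eq_add.mp h))
  have hdisj : Disjoint (u \ v) (v \ u) := disjoint_sdiff_sdiff
  have hsplit : symmDiff u v = (u \ v) ∪ (v \ u) := symmDiff_def u v
  have hcard2 : (symmDiff u v).card = 2 := by
    rw [hs, Finset.card_insert_of_notMem (Finset.notMem_singleton.mpr hjj), Finset.card_singleton]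
  have hcards : (u \ v).card = (v \ u).card := by
    have h1 := Finset.card_sdiff_add_card_inter u v
    have h2 := Finset.card_sdiff_add_card_inter v u
    rw [Finset.inter_comm v u] at h2
    omega
  have hcu : (u \ v).card = 1 := by
    have := Finset.card_union_of_disjoint hdisj
    rw [← hsplit, hcard2] at this
    omega
  have hcv : (v \ u).card = 1 := by omega
  obtain ⟨a, hA⟩ := Finset.card_eq_one.mp hcu
  obtain ⟨b, hB⟩ := Finset.card_eq_one.mp hcv
  have hab : a ≠ b := by
    intro h
    subst h
    have h1 : a ∈ u \ v := by rw [hA]; exact Finset.mem_singleton_self a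
    have h2 : a ∈ v \ u := by rw [hB]; exact Finset.mem_singleton_self a
    exact Finset.disjoint_left.mp hdisj h1 h2
  have hmemab : ({a, b} : Finset (Fin L)) = {j, j + ((1:ℕ) : Fin L)} := by
    rw [← hs, hsplit, hA, hB]; rfl
  have hsum_u : ∑ k ∈ u, g k = (∑ k ∈ u ∩ v, g k) + g a := by
    have := Finset.sum_inter_add_sum_sdiff u v g
    rw [hA, Finset.sum_singleton] at this
    omega
  have hsum_v : ∑ k ∈ v, g k = (∑ k ∈ u ∩ v, g k) + g b := by
    have := Finset.sum_inter_add_sum_sdiff v u g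
    rw [hB, Finset.sum_singleton, Finset.inter_comm v u] at this
    omega
  have hcases : (a = j ∧ b = j + ((1:ℕ) : Fin L)) ∨ (a = j + ((1:ℕ) : Fin L) ∧ b = j) := by
    have ha' : a ∈ ({j, j + ((1:ℕ) : Fin L)} : Finset (Fin L)) := by
      rw [← hmemab]; simp
    have hb' : b ∈ ({j, j + ((1:ℕ) : Fin L)} : Finset (Fin L)) := by
      rw [← hmemab]; simp
    simp only [Finset.mem_insert, Finset.mem_singleton] at ha' hb'
    rcases ha' with h1 | h1 <;> rcases hb' with h2 | h2
    · exact absurd (h1.trans h2.symm) hab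
    · exact Or.inl ⟨h1, h2⟩
    · exact Or.inr ⟨h1, h2⟩
    · exact absurd (h1.trans h2.symm) hab
  have := hg j
  rcases hcases with ⟨h1, h2⟩ | ⟨h1, h2⟩ <;> subst h1 <;> subst h2 <;> omega

lemma walk_sum_bound (hL : 2 ≤ L) (g : Fin L → ℕ)
    (hg : ∀ j : Fin L, g (j + ((1:ℕ) : Fin L)) ≤ g j + 1 ∧ g j ≤ g (j + ((1:ℕ) : Fin L)) + 1)
    {x y : Finset (Fin L)} (p : (hcGraph L).Walk x y) :
    ∑ k ∈ x, g k ≤ (∑ k ∈ y, g k) + p.length := by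
  induction p with
  | nil => simp
  | cons h p ih =>
    have h1 := adj_sum_bound hL g hg h
    rw [SimpleGraph.Walk.length_cons]
    omega

end walkbound

lemma exists_gap (S : Finset ℕ) (h0 : 0 ∉ S) (hS : S ≠ Finset.Icc 1 S.card) :
    ∃ s ∈ S, 2 ≤ s ∧ s - 1 ∉ S := by
  by_contra hcon
  push_neg at hcon
  apply hS
  have down : ∀ d s, s ∈ S → ∀ t, 1 ≤ t → t ≤ s → s - t ≤ d → t ∈ S := by
    intro d
    induction d with
    | zero =>
      intro s hs t h1 h2 h3
      have : s = t := by omega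
      exact this ▸ hs
    | succ d ih =>
      intro s hs t h1 h2 h3
      by_cases hst : s = t
      · exact hst ▸ hs
      · have hs2 : 2 ≤ s := by omega
        have := hcon s hs hs2
        exact ih (s - 1) this t h1 (by omega) (by omega)
  have hsub : S ⊆ Finset.Icc 1 S.card := by
    intro s hs
    have h1 : 1 ≤ s := by
      rcases Nat.eq_zero_or_pos s with h | h
      · exact absurd (h ▸ hs) h0
      · exact h
    have h2 : Finset.Icc 1 s ⊆ S := by
      intro t ht
      rw [Finset.mem_Icc] at ht
      exact down s s hs t ht.1 ht.2 (Nat.sub_le s t)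
    have := Finset.card_le_card h2
    rw [Nat.card_Icc] at this
    rw [Finset.mem_Icc]
    omega
  exact Finset.eq_of_subset_of_card_le hsub (by rw [Nat.card_Icc]; omega)

section reach
variable {L : ℕ} [NeZero L]

lemma reach_interval {N : ℕ} (hNL : N < L) (z : Fin L) :
    ∀ x : Finset (Fin L), x.card = N → z ∉ x →
      (hcGraph L).Reachable x
        ((Finset.range N).image fun i : ℕ => z + ((1:ℕ) : Fin L) + ((i:ℕ) : Fin L)) := by
  suffices H : ∀ p : ℕ, ∀ x : Finset (Fin L), (∑ k ∈ x, (k - z).val) ≤ p → x.card = N → z ∉ x →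
      (hcGraph L).Reachable x
        ((Finset.range N).image fun i : ℕ => z + ((1:ℕ) : Fin L) + ((i:ℕ) : Fin L)) by
    exact fun x hc hz => H _ x le_rfl hc hz
  intro p
  induction p with
  | zero =>
    intro x hP hc hz
    have hxe : x = ∅ := by
      rw [Finset.eq_empty_iff_forall_notMem]
      intro k hk
      have h1 : (k - z).val = 0 := by
        have h2 := Finset.single_le_sum (f := fun q : Fin L => (q - z).val)
          (fun i _ => Nat.zero_le _) hk
        omega
      have hkz : k = z := sub_eq_zero.mp (by apply Fin.ext; simpa using h1)
      exact hz (hkz ▸ hk)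
    subst hxe
    have hN0 : N = 0 := by simpa using hc.symm
    subst hN0
    simp only [Finset.range_zero, Finset.image_empty]
    exact SimpleGraph.Reachable.refl _
  | succ p ih =>
    intro x hP hc hz
    by_cases hx : x = (Finset.range N).image fun i : ℕ => z + ((1:ℕ) : Fin L) + ((i:ℕ) : Fin L)
    · exact hx ▸ SimpleGraph.Reachable.refl _
    · set pos : Fin L → ℕ := fun k => (k - z).val with hpos
      have hposinj : Set.InjOn pos ↑x := by
        intro a _ b _ h
        have : a - z = b - z := Fin.val_injective h
        exact sub_left_injective this
      set S : Finset ℕ := x.image pos with hSdef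
      have hScard : S.card = N := by rw [hSdef, Finset.card_image_of_injOn hposinj, hc]
      have h0S : 0 ∉ S := by
        intro h
        rw [hSdef, Finset.mem_image] at h
        obtain ⟨k, hk, hk0⟩ := h
        exact hz ((sub_eq_zero.mp (by apply Fin.ext; simpa [hpos] using hk0 : k - z = 0)) ▸ hk)
      have hxS : S.image (fun s : ℕ => z + ((s:ℕ) : Fin L)) = x := by
        rw [hSdef, Finset.image_image]
        have he : ∀ k ∈ x, z + ((pos k : ℕ) : Fin L) = k := by
          intro k hk
          show z + ((((k - z).val : ℕ)) : Fin L) = k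
          rw [Fin.cast_val_eq_self]
          ring
        calc x.image (fun k => z + ((pos k : ℕ) : Fin L)) = x.image id :=
              Finset.image_congr he
        _ = x := Finset.image_id
      have hSne : S ≠ Finset.Icc 1 N := by
        intro hEq
        apply hx
        have hIcc : Finset.Icc 1 N = (Finset.range N).image (· + 1) := by
          ext a
          simp only [Finset.mem_Icc, Finset.mem_image, Finset.mem_range]
          constructor
          · intro h; exact ⟨a - 1, by omega, by omega⟩
          · rintro ⟨b, hb, rfl⟩; omega
        rw [← hxS, hEq, hIcc, Finset.image_image]
        apply Finset.image_congr
        intro i _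
        show z + ((i + 1 : ℕ) : Fin L) = z + ((1:ℕ) : Fin L) + ((i:ℕ) : Fin L)
        push_cast
        ring
      obtain ⟨s, hsS, hs2, hs1⟩ := exists_gap S h0S (by rw [hScard]; exact hSne)
      obtain ⟨k, hkx, hks⟩ := Finset.mem_image.mp (hSdef ▸ hsS)
      have hsL : s < L := hks ▸ (k - z).isLt
      have hk_eq : k = z + ((s : ℕ) : Fin L) := by
        rw [← hks]
        show k = z + ((((k - z).val : ℕ)) : Fin L)
        rw [Fin.cast_val_eq_self]
        ring
      set b : Fin L := z + ((s - 1 : ℕ) : Fin L) with hbdef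
      have hposb : pos b = s - 1 := by
        show ((z + ((s - 1 : ℕ) : Fin L)) - z).val = s - 1
        rw [add_sub_cancel_left, Fin.val_cast_of_lt (by omega)]
      have hbx : b ∉ x := by
        intro h
        exact hs1 (hposb ▸ (hSdef ▸ Finset.mem_image_of_mem pos h))
      have hkb : k ≠ b := by
        intro h
        have := congrArg pos h
        rw [hposb] at this
        rw [show pos k = s from hks] at this
        omega
      have hk2 : k = b + ((1:ℕ) : Fin L) := by
        rw [hk_eq, hbdef, add_assoc, ← Nat.cast_add,
          show s - 1 + 1 = s by omega]
      set x' : Finset (Fin L) := insert b (x.erase k) with hx'def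
      have hbe : b ∉ x.erase k := fun h => hbx (Finset.mem_of_mem_erase h)
      have hcard' : x'.card = x.card := by
        rw [hx'def, Finset.card_insert_of_notMem hbe, Finset.card_erase_of_mem hkx]
        have : 1 ≤ x.card := Finset.card_pos.mpr ⟨k, hkx⟩
        omega
      have hadj : (hcGraph L).Adj x x' := by
        refine ⟨hcard'.symm, b, ?_⟩
        rw [hx'def, symmDiff_insert_erase hkx hbx hkb, Finset.pair_comm, hk2]
      have hsum' : (∑ q ∈ x', pos q) ≤ p := by
        show x'.sum pos ≤ p
        have hP' : x.sum pos ≤ p + 1 := hP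
        have h1 : x'.sum pos = pos b + (x.erase k).sum pos := by
          rw [hx'def]; exact Finset.sum_insert hbe
        have h2 : (x.erase k).sum pos + pos k = x.sum pos :=
          Finset.sum_erase_add x pos hkx
        rw [show pos k = s from hks] at h2
        rw [hposb] at h1
        omega
      have hz' : z ∉ x' := by
        rw [hx'def, Finset.mem_insert]
        rintro (h | h)
        · have := congrArg pos h
          rw [hposb] at this
          have : pos z = 0 := by
            show ((z - z : Fin L)).val = 0
            rw [sub_self]
            simp
          omega
        · exact hz (Finset.mem_of_mem_erase h)
      exact (hadj.reachable).trans (ih x' hsum' (hcard'.trans hc) hz')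

lemma reach_any {N : ℕ} {x y : Finset (Fin L)} (hx : x.card = N) (hy : y.card = N)
    (hN : 2 * N < L) : (hcGraph L).Reachable x y := by
  have hcu : (x ∪ y).card < L := by
    have := Finset.card_union_le x y
    omega
  have : ∃ z : Fin L, z ∉ x ∪ y := by
    by_contra h
    push_neg at h
    have : Finset.univ ⊆ x ∪ y := fun z _ => h z
    have := Finset.card_le_card this
    rw [Finset.card_univ, Fintype.card_fin] at this
    omega
  obtain ⟨z, hz⟩ := this
  rw [Finset.mem_union] at hz
  push_neg at hz
  exact (reach_interval (by omega) z x hx hz.1).trans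
    (reach_interval (by omega) z y hy hz.2).symm

end reach

set_option maxHeartbeats 1000000 in
/-- For large `L`, configurations with `N/2 < n < N` particles inside `Λ_L` that are not too
far from the droplet set have all closest-droplet centres in `𝒮_{L,M}(θ+ε)`, and the
corresponding droplets are contained in `𝒮_{L,M}(θ+2ε)`. -/
theorem closest_centres_in_sector (ε θ : ℝ)
    (hε : 0 < ε) (hε' : ε < 1 / 16) (hθ : ε < θ) (hθ' : θ < 1 / 16) :
    ∃ L₀ : ℕ, ∀ (L : ℕ) [NeZero L], L₀ ≤ L →
      ∀ n : ℕ, NL ε L < 2 * n → n < NL ε L →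
      ∀ x : Finset (Fin L), x.card = NL ε L →
      (distDrop L (NL ε L) x : ℝ) < (L : ℝ) ^ ((3 : ℝ) / 2) →
      (x ∩ secF L (midL L) θ).card = n →
      (∀ m ∈ WL L (NL ε L) x, m ∈ sector L (midL L) (θ + ε)) ∧
      (∀ m ∈ WL L (NL ε L) x, ∀ j ∈ droplet L (NL ε L) m,
        j ∈ sector L (midL L) (θ + 2 * ε)) := by
  refine ⟨⌈2 / ε + 64 / ε ^ 4⌉₊ + 2, ?_⟩
  intro L _ hL n hn1 hn2 x hxcard hxdist hxn
  set N := NL ε L with hNdef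
  set M := midL L with hMdef
  have hL2 : 2 ≤ L := by omega
  have hL0 : (0:ℝ) ≤ (L:ℝ) := by positivity
  have hLpos : (0:ℝ) < (L:ℝ) := by
    have : (2:ℝ) ≤ L := by exact_mod_cast hL2
    linarith
  have hLR : 2 / ε + 64 / ε ^ 4 + 2 ≤ (L:ℝ) := by
    have h1 : (⌈2 / ε + 64 / ε ^ 4⌉₊ + 2 : ℝ) ≤ (L:ℝ) := by exact_mod_cast hL
    have h2 := Nat.le_ceil (2 / ε + 64 / ε ^ 4)
    linarith
  have hεpos4 : (0:ℝ) < ε ^ 4 := by positivity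
  have hεL2 : (2:ℝ) ≤ ε * L := by
    have h1 : 2 / ε ≤ (L:ℝ) := by
      have : (0:ℝ) ≤ 64 / ε ^ 4 := by positivity
      linarith
    rw [div_le_iff₀ hε] at h1
    linarith [h1]
  have hLbig : 64 / ε ^ 4 < (L:ℝ) := by
    have : (0:ℝ) ≤ 2 / ε := by positivity
    linarith
  have hNle : (N:ℝ) ≤ ε * L := Nat.floor_le (by positivity)
  have hNgt : ε * L < (N:ℝ) + 1 := Nat.lt_floor_add_one _
  have hN1 : 1 ≤ N := Nat.le_floor (by exact_mod_cast (by linarith : (1:ℝ) ≤ ε * L))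
  have hNL : 2 * N < L := by
    have h1 : (2 * N : ℝ) < (L:ℝ) := by nlinarith
    exact_mod_cast h1
  have hNLlt : N < L := by omega
  -- Part 1
  have key : ∀ m ∈ WL L N x, m ∈ sector L M (θ + ε) := by
    intro m hm
    by_contra hfar
    rw [hMdef, sector, Set.mem_setOf_eq, not_lt] at hfar
    rw [WL, Set.mem_setOf_eq] at hm
    set C := ⌈(θ + ε / 2) * L⌉₊ with hCdef
    set g : Fin L → ℕ := fun k => C - cycDist k M with hgdef
    have hlip : ∀ j : Fin L, g (j + ((1:ℕ) : Fin L)) ≤ g j + 1 ∧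
        g j ≤ g (j + ((1:ℕ) : Fin L)) + 1 := by
      intro j
      have ha := cycDist_triangle (j + ((1:ℕ) : Fin L)) j M
      have hb := cycDist_triangle j (j + ((1:ℕ) : Fin L)) M
      have hc1 := cycDist_adj hL2 j
      have hc2 : cycDist (j + ((1:ℕ) : Fin L)) j = cycDist j (j + ((1:ℕ) : Fin L)) :=
        cycDist_comm _ _
      simp only [hgdef]
      omega
    have hdrop0 : ∀ k ∈ droplet L N m, g k = 0 := by
      intro k hk
      have h2d := droplet_dist (le_of_lt hNLlt) m k hk
      have htr := cycDist_triangle m k M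
      have hcc : cycDist m k = cycDist k m := cycDist_comm _ _
      have hreal : (θ + ε / 2) * L ≤ (cycDist k M : ℝ) := by
        have h1 : (2 * cycDist k m : ℝ) ≤ (N:ℝ) := by exact_mod_cast h2d
        have h2 : (cycDist m M : ℝ) ≤ (cycDist m k : ℝ) + (cycDist k M : ℝ) := by
          exact_mod_cast htr
        rw [hcc] at h2
        have h3 : (θ + ε) * L ≤ (cycDist m M : ℝ) := hfar
        nlinarith
      have hCle : C ≤ cycDist k M := Nat.ceil_le.mpr hreal
      simp only [hgdef]
      omega
    have hfxk : ∀ k ∈ x ∩ secF L M θ, ε * L / 2 ≤ (g k : ℝ) := by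
      intro k hk
      have hks : (cycDist k M : ℝ) < θ * L := by
        have := (Finset.mem_inter.mp hk).2
        rw [secF, Finset.mem_filter] at this
        exact this.2
      have hCge : (θ + ε / 2) * L ≤ (C:ℝ) := Nat.le_ceil _
      have hdC : cycDist k M < C := by
        have : (cycDist k M : ℝ) < (C:ℝ) := by nlinarith
        exact_mod_cast this
      have hgk : (g k : ℝ) = (C:ℝ) - (cycDist k M : ℝ) := by
        simp only [hgdef]
        push_cast [Nat.cast_sub (le_of_lt hdC)]
        ring
      rw [hgk]
      linarith
    have hreach : (hcGraph L).Reachable x (droplet L N m) :=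
      reach_any hxcard (droplet_card (le_of_lt hNLlt) m) hNL
    obtain ⟨p, hp⟩ := hreach.exists_walk_length_eq_dist
    have hwalk := walk_sum_bound hL2 g hlip p
    have hdropsum : ∑ k ∈ droplet L N m, g k = 0 := Finset.sum_eq_zero hdrop0
    have hlen : p.length = distDrop L N x := by rw [hp]; exact hm
    have hBn : (∑ k ∈ x, g k) ≤ distDrop L N x := by
      rw [hdropsum] at hwalk
      omega
    have hA : (n : ℝ) * (ε * L / 2) ≤ ((∑ k ∈ x, g k : ℕ) : ℝ) := by
      have h2 := Finset.card_nsmul_le_sum (x ∩ secF L M θ)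
        (fun k => (g k : ℝ)) (ε * L / 2) hfxk
      rw [hxn, nsmul_eq_mul] at h2
      have h3 : (∑ k ∈ x ∩ secF L M θ, g k) ≤ ∑ k ∈ x, g k :=
        Finset.sum_le_sum_of_subset (Finset.inter_subset_left)
      have h4 : ((∑ k ∈ x ∩ secF L M θ, g k : ℕ) : ℝ) ≤ ((∑ k ∈ x, g k : ℕ) : ℝ) := by
        exact_mod_cast h3
      push_cast at h2 h4 ⊢
      linarith
    have hB : ((∑ k ∈ x, g k : ℕ) : ℝ) < (L:ℝ) ^ ((3:ℝ)/2) := by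
      have : ((∑ k ∈ x, g k : ℕ) : ℝ) ≤ ((distDrop L N x : ℕ) : ℝ) := by exact_mod_cast hBn
      calc ((∑ k ∈ x, g k : ℕ) : ℝ) ≤ _ := this
      _ < _ := hxdist
    have hn_lb : (ε * L - 1) / 2 < (n:ℝ) := by
      have h1 : (N:ℝ) < 2 * n := by exact_mod_cast hn1
      linarith
    set s : ℝ := (L:ℝ) ^ ((1:ℝ)/2) with hsdef
    have hs0 : 0 ≤ s := Real.rpow_nonneg hL0 _
    have hs2 : s ^ (2:ℕ) = (L:ℝ) := by
      rw [hsdef, ← Real.rpow_natCast ((L:ℝ) ^ ((1:ℝ)/2)) 2, ← Real.rpow_mul hL0]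
      norm_num
    have hs3 : s ^ (3:ℕ) = (L:ℝ) ^ ((3:ℝ)/2) := by
      rw [hsdef, ← Real.rpow_natCast ((L:ℝ) ^ ((1:ℝ)/2)) 3, ← Real.rpow_mul hL0]
      norm_num
    have hspos : 0 < s := by nlinarith
    have hεs : 8 < ε ^ 2 * s := by
      have h1 : 64 / ε ^ 4 < s ^ 2 := by rw [hs2]; exact hLbig
      have h2 : 64 < ε ^ 4 * s ^ 2 := by
        rw [div_lt_iff₀ hεpos4] at h1
        nlinarith
      have ha0 : 0 ≤ ε ^ 2 * s := by positivity
      by_contra hcon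
      push_neg at hcon
      have h7 : (ε ^ 2 * s) * (ε ^ 2 * s) ≤ 8 * 8 :=
        mul_le_mul hcon hcon ha0 (by norm_num)
      nlinarith [h2, h7]
    have hfinal1 : ε ^ 2 * (L:ℝ) ^ 2 / 8 < (L:ℝ) ^ ((3:ℝ)/2) := by
      have h5 : ε * L / 4 < (n:ℝ) := by linarith
      have h6 : (n:ℝ) * (ε * L / 2) < (L:ℝ) ^ ((3:ℝ)/2) := lt_of_le_of_lt hA hB
      nlinarith
    have hfinal2 : (L:ℝ) ^ ((3:ℝ)/2) ≤ ε ^ 2 * (L:ℝ) ^ 2 / 8 := by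
      rw [← hs3, ← hs2]
      nlinarith [pow_pos hspos 3]
    linarith
  refine ⟨key, ?_⟩
  intro m hm j hj
  have hms := key m hm
  rw [hMdef, sector, Set.mem_setOf_eq] at hms ⊢
  have htr := cycDist_triangle j m (midL L)
  have hjm := droplet_dist (le_of_lt hNLlt) m j hj
  have h1 : (cycDist j (midL L) : ℝ) ≤ (cycDist j m : ℝ) + (cycDist m (midL L) : ℝ) := by
    exact_mod_cast htr
  have h2 : (2 * cycDist j m : ℝ) ≤ (N:ℝ) := by exact_mod_cast hjm
  nlinarith
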